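/- Let p be a prime with p ≡ 3 (mod 4), q = (p-1)/2, and let d̄ : ℤ/pℤ → ℚ be a function with d̄(0) = 0 and d̄(-x) = d̄(x) for all x. Suppose M ⊆ (ℤ/p²ℤ)^n is a subgroup of order p^n such that for every element (p·m₁, ..., p·mₙ) of M lying in the p-torsion subgroup (mᵢ ∈ ℤ/pℤ), one has Σᵢ d̄(mᵢ) = 0. Then d̄ is identically zero. -/

import Mathlib

private lemma stmt16_aux_cast (p m k : ℕ) (h : m % p = k % p) :
    ((p * m : ℕ) : ZMod (p ^ 2)) = ((p * k : ℕ) : ZMod (p ^ 2)) := by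
  rw [ZMod.natCast_eq_natCast_iff']
  rw [pow_two, Nat.mul_mod_mul_left, Nat.mul_mod_mul_left, h]

private def stmt16_fh (p : ℕ) [NeZero p] : ZMod p →+ ZMod (p ^ 2) where
  toFun a := ((p * a.val : ℕ) : ZMod (p ^ 2))
  map_zero' := by simp
  map_add' a b := by
    have h : (a + b).val % p = (a.val + b.val) % p := by
      rw [ZMod.val_add]; simp [Nat.mod_mod_of_dvd]
    rw [show ((p * a.val : ℕ) : ZMod (p ^ 2)) + ((p * b.val : ℕ) : ZMod (p ^ 2))
        = ((p * (a.val + b.val) : ℕ) : ZMod (p ^ 2)) by push_cast; ring]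
    exact stmt16_aux_cast p _ _ h

private def stmt16_Fh (p n : ℕ) [NeZero p] : (Fin n → ZMod p) →+ (Fin n → ZMod (p ^ 2)) where
  toFun m := fun i => stmt16_fh p (m i)
  map_zero' := by funext i; exact (stmt16_fh p).map_zero
  map_add' a b := by funext i; exact (stmt16_fh p).map_add _ _

private def stmt16_Rh (p n : ℕ) [NeZero p] [NeZero (p ^ 2)] :
    (Fin n → ZMod (p ^ 2)) →+ (Fin n → ZMod p) where
  toFun m := fun i => ZMod.castHom (dvd_pow_self p two_ne_zero) (ZMod p) (m i)
  map_zero' := by funext i; simp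
  map_add' a b := by
    funext i
    exact map_add (ZMod.castHom (dvd_pow_self p two_ne_zero) (ZMod p)) (a i) (b i)

private lemma stmt16_orbit (p : ℕ) (hp : p.Prime) (h3 : p % 4 = 3)
    (dbar : ZMod p → ℚ) (hdneg : ∀ x, dbar (-x) = dbar x)
    (u : ZMod p) (hu : u ≠ 0) (hrel : ∀ x, dbar (u * x) = - dbar x) :
    ∀ x, dbar x = 0 := by
  haveI : Fact p.Prime := ⟨hp⟩
  have hp3 : 3 ≤ p := by omega
  have hpow : ∀ (j : ℕ) (x : ZMod p), dbar (u ^ j * x) = (-1 : ℚ) ^ j * dbar x := by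
    intro j
    induction j with
    | zero => intro x; simp
    | succ j ih =>
      intro x
      have : u ^ (j + 1) * x = u ^ j * (u * x) := by ring
      rw [this, ih (u * x), hrel x, pow_succ]
      ring
  have hfu : u ^ (p - 1) = 1 := ZMod.pow_card_sub_one_eq_one hu
  have hfin : IsOfFinOrder u := isOfFinOrder_iff_pow_eq_one.mpr ⟨p - 1, by omega, hfu⟩
  set d := orderOf u with hd
  have hdpos : 0 < d := hfin.orderOf_pos
  have hd1 : u ^ d = 1 := pow_orderOf_eq_one u
  have hddvd : d ∣ p - 1 := orderOf_dvd_of_pow_eq_one hfu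
  have h4 : ¬ (4 ∣ d) := by
    intro h4d
    have : (4 : ℕ) ∣ p - 1 := h4d.trans hddvd
    omega
  intro x
  rcases Nat.even_or_odd d with he | ho
  · obtain ⟨e, he2⟩ := he
    have hepos : 0 < e := by omega
    have heodd : Odd e := by
      rcases Nat.even_or_odd e with ⟨f, hf⟩ | h
      · exfalso; exact h4 ⟨f, by omega⟩
      · exact h
    have hne : u ^ e ≠ 1 := by
      intro h1
      have : d ∣ e := orderOf_dvd_of_pow_eq_one h1
      have := Nat.le_of_dvd hepos this
      omega
    have hsq : (u ^ e) * (u ^ e) = 1 := by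
      rw [← pow_add, show e + e = d by omega, hd1]
    have hm1 : u ^ e = -1 := by
      have hz : (u ^ e - 1) * (u ^ e + 1) = 0 := by
        have : (u ^ e - 1) * (u ^ e + 1) = u ^ e * u ^ e - 1 := by ring
        rw [this, hsq, sub_self]
      rcases mul_eq_zero.mp hz with h | h
      · exact absurd (by linear_combination h) hne
      · linear_combination h
    have h1 := hpow e x
    rw [hm1, neg_one_mul, hdneg x, heodd.neg_one_pow] at h1
    linarith
  · have h1 := hpow d x
    rw [hd1, one_mul, ho.neg_one_pow] at h1
    linarith

private lemma stmt16_comb (p n : ℕ) (hp : p.Prime) (h3 : p % 4 = 3) (hn : 0 < n)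
    (dbar : ZMod p → ℚ) (hd0 : dbar 0 = 0) (hdneg : ∀ x, dbar (-x) = dbar x)
    (V : AddSubgroup (Fin n → ZMod p))
    (hVsum : ∀ v ∈ V, ∑ i, dbar (v i) = 0)
    (hVsmul : ∀ (c : ZMod p), ∀ v ∈ V, (fun j => c * v j) ∈ V)
    (hVcard : p ^ n ≤ Nat.card V * Nat.card V) :
    ∀ x, dbar x = 0 := by
  classical
  haveI : Fact p.Prime := ⟨hp⟩
  haveI : NeZero p := ⟨hp.pos.ne'⟩
  set NZ : Fin n → Prop := fun k => ∃ v ∈ V, v k ≠ 0 with hNZdef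
  set sim : Fin n → Fin n → Prop :=
    fun k j => ∃ c : ZMod p, c ≠ 0 ∧ ∀ v ∈ V, v k = c * v j with hsimdef
  have sim_refl : ∀ k, sim k k := fun k => ⟨1, one_ne_zero, fun v _ => by rw [one_mul]⟩
  have sim_symm : ∀ {k j}, sim k j → sim j k := by
    rintro k j ⟨c, hc, h⟩
    exact ⟨c⁻¹, inv_ne_zero hc, fun v hv => by rw [h v hv]; field_simp⟩
  have sim_trans : ∀ {k j l}, sim k j → sim j l → sim k l := by
    rintro k j l ⟨c, hc, h⟩ ⟨c', hc', h'⟩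
    exact ⟨c * c', mul_ne_zero hc hc', fun v hv => by rw [h v hv, h' v hv]; ring⟩
  set Clf : Fin n → Finset (Fin n) :=
    fun i => Finset.univ.filter (fun k => NZ k ∧ sim k i) with hClfdef
  -- Part A : there is a small similarity class
  have hsmall : ∃ i, NZ i ∧ (Clf i).card ≤ 2 := by
    by_contra hcon
    push_neg at hcon
    set rep : Fin n → Fin n := fun k =>
      (Finset.univ.filter (fun j => sim j k)).min'
        ⟨k, Finset.mem_filter.mpr ⟨Finset.mem_univ k, sim_refl k⟩⟩ with hrepdef
    have hrep_sim : ∀ k, sim (rep k) k := by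
      intro k
      have := (Finset.univ.filter (fun j => sim j k)).min'_mem
        ⟨k, Finset.mem_filter.mpr ⟨Finset.mem_univ k, sim_refl k⟩⟩
      exact (Finset.mem_filter.mp this).2
    have hrep_eq : ∀ k j, sim k j → rep k = rep j := by
      intro k j hkj
      have hfe : (Finset.univ.filter (fun a => sim a k))
          = (Finset.univ.filter (fun a => sim a j)) := by
        ext a
        simp only [Finset.mem_filter, Finset.mem_univ, true_and]
        exact ⟨fun h => sim_trans h hkj, fun h => sim_trans h (sim_symm hkj)⟩
      simp only [hrepdef]
      congr 1
    set R : Finset (Fin n) := (Finset.univ.filter NZ).image rep with hRdef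
    have hVle : Nat.card V ≤ p ^ R.card := by
      set ψ : ↥V → (↥R → ZMod p) := fun v r => (v : Fin n → ZMod p) r with hψdef
      have hinj : Function.Injective ψ := by
        intro v w h
        apply Subtype.ext
        funext k
        by_cases hk : NZ k
        · have hr : rep k ∈ R := Finset.mem_image_of_mem rep
            (Finset.mem_filter.mpr ⟨Finset.mem_univ k, hk⟩)
          obtain ⟨c, hc, hck⟩ := hrep_sim k
          have h1 : (v : Fin n → ZMod p) (rep k) = (w : Fin n → ZMod p) (rep k) :=
            congrFun h ⟨rep k, hr⟩
          rw [hck _ v.2, hck _ w.2] at h1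
          exact mul_left_cancel₀ hc h1
        · simp only [hNZdef, not_exists, not_and, ne_eq, not_not] at hk
          rw [hk _ v.2, hk _ w.2]
      calc Nat.card V ≤ Nat.card (↥R → ZMod p) := Nat.card_le_card_of_injective ψ hinj
        _ = p ^ R.card := by
          rw [Nat.card_eq_fintype_card, Fintype.card_fun, ZMod.card, Fintype.card_coe]
    have hn2R : n ≤ 2 * R.card := by
      have h1 : p ^ n ≤ p ^ (2 * R.card) := by
        calc p ^ n ≤ Nat.card V * Nat.card V := hVcard
          _ ≤ (p ^ R.card) * (p ^ R.card) := Nat.mul_le_mul hVle hVle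
          _ = p ^ (2 * R.card) := by rw [← pow_add]; ring_nf
      exact (Nat.pow_le_pow_iff_right hp.one_lt).mp h1
    have hfib : 3 * R.card ≤ (Finset.univ.filter NZ).card := by
      rw [Finset.card_eq_sum_card_fiberwise (f := rep) (t := R)
        (fun k hk => Finset.mem_image_of_mem rep hk)]
      calc 3 * R.card = ∑ _r ∈ R, 3 := by rw [Finset.sum_const, smul_eq_mul]; ring
        _ ≤ _ := by
          apply Finset.sum_le_sum
          intro r hr
          obtain ⟨k₀, hk₀, hrk₀⟩ := Finset.mem_image.mp hr
          have hk₀NZ : NZ k₀ := (Finset.mem_filter.mp hk₀).2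
          have hsub : Clf k₀ ⊆ (Finset.univ.filter NZ).filter (fun k => rep k = r) := by
            intro k hk
            simp only [hClfdef, Finset.mem_filter, Finset.mem_univ, true_and] at hk ⊢
            exact ⟨hk.1, by rw [hrep_eq k k₀ hk.2]; exact hrk₀⟩
          calc 3 ≤ (Clf k₀).card := hcon k₀ hk₀NZ
            _ ≤ _ := Finset.card_le_card hsub
    have hNZn : (Finset.univ.filter NZ).card ≤ n := by
      calc (Finset.univ.filter NZ).card ≤ Finset.univ.card := Finset.card_filter_le _ _
        _ = n := by simp
    omega
  -- Part B : the master relation for a small class and the endgame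
  obtain ⟨i, hiNZ, hcard2⟩ := hsmall
  have hiNZ' : ∃ v ∈ V, v i ≠ 0 := hiNZ
  obtain ⟨w, hwV, hwi⟩ := hiNZ'
  set cc : Fin n → ZMod p := fun k => if h : sim k i then h.choose else 1 with hccdef
  have hcc : ∀ k ∈ Clf i, cc k ≠ 0 ∧ ∀ v ∈ V, v k = cc k * v i := by
    intro k hk
    have hs : sim k i := (Finset.mem_filter.mp hk).2.2
    simp only [hccdef, dif_pos hs]
    exact hs.choose_spec
  set Vf : Finset (Fin n → ZMod p) := Finset.univ.filter (· ∈ V) with hVfdef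
  set J : Fin n → ZMod p → ℚ :=
    fun k t => ∑ v ∈ Vf.filter (fun v => v i = t), dbar (v k) with hJdef
  have hJtot : ∀ t, ∑ k, J k t = 0 := by
    intro t
    rw [hJdef]
    rw [Finset.sum_comm]
    apply Finset.sum_eq_zero
    intro v hv
    exact hVsum v (Finset.mem_filter.mp (Finset.mem_filter.mp hv).1).2
  have hsur1 : ∀ t : ZMod p, ∃ v ∈ V, v i = t := by
    intro t
    refine ⟨fun j => (t * (w i)⁻¹) * w j, hVsmul _ w hwV, ?_⟩
    field_simp
  have htrans : ∀ (v₀ : Fin n → ZMod p), v₀ ∈ V → ∀ (k : Fin n) (t : ZMod p),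
      v₀ i = t → v₀ k = 0 → J k t = J k 0 := by
    intro v₀ hv₀ k t hv₀i hv₀k
    show (∑ v ∈ Vf.filter (fun v => v i = t), dbar (v k))
        = ∑ v ∈ Vf.filter (fun v => v i = 0), dbar (v k)
    refine Finset.sum_nbij' (fun v => v - v₀) (fun v => v + v₀) ?_ ?_ ?_ ?_ ?_
    · intro v hv
      rw [Finset.mem_filter] at hv ⊢
      obtain ⟨hv1, hv2⟩ := hv
      rw [Finset.mem_filter] at hv1
      refine ⟨Finset.mem_filter.mpr ⟨Finset.mem_univ _, sub_mem hv1.2 hv₀⟩, ?_⟩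
      show v i - v₀ i = 0
      rw [hv2, hv₀i, sub_self]
    · intro v hv
      rw [Finset.mem_filter] at hv ⊢
      obtain ⟨hv1, hv2⟩ := hv
      rw [Finset.mem_filter] at hv1
      refine ⟨Finset.mem_filter.mpr ⟨Finset.mem_univ _, add_mem hv1.2 hv₀⟩, ?_⟩
      show v i + v₀ i = t
      rw [hv2, hv₀i, zero_add]
    · intro v _; simp
    · intro v _; simp
    · intro v _
      show dbar (v k) = dbar (v k - v₀ k)
      rw [hv₀k, sub_zero]
  have hJoff : ∀ k, k ∉ Clf i → ∀ t, J k t = J k 0 := by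
    intro k hk t
    by_cases hNZk : NZ k
    · have hnsim : ¬ sim k i := by
        intro hs
        exact hk (Finset.mem_filter.mpr ⟨Finset.mem_univ _, hNZk, hs⟩)
      have hsur2 : ∃ v₁ ∈ V, v₁ i = 0 ∧ v₁ k ≠ 0 := by
        by_contra hcon
        push_neg at hcon
        apply hnsim
        have hall : ∀ v ∈ V, v k = (w k * (w i)⁻¹) * v i := by
          intro v hv
          have huV : (fun j => w i * v j + (-(v i)) * w j) ∈ V :=
            add_mem (hVsmul (w i) v hv) (hVsmul (-(v i)) w hwV)
          have hui : (fun j => w i * v j + (-(v i)) * w j) i = 0 := by ring_nf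
          have huk := hcon _ huV hui
          have hvw : w i * v k = v i * w k := by linear_combination huk
          field_simp
          linear_combination hvw
        have hNZk' : ∃ v ∈ V, v k ≠ 0 := hNZk
        obtain ⟨v₂, hv₂V, hv₂k⟩ := hNZk'
        refine ⟨w k * (w i)⁻¹, ?_, hall⟩
        intro hc0
        exact hv₂k (by rw [hall v₂ hv₂V, hc0, zero_mul])
      obtain ⟨v₁, hv₁V, hv₁i, hv₁k⟩ := hsur2
      set a : ZMod p := t * (w i)⁻¹ with hadef
      set b : ZMod p := -(a * w k * (v₁ k)⁻¹) with hbdef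
      have hv₀V : (fun j => a * w j + b * v₁ j) ∈ V :=
        add_mem (hVsmul a w hwV) (hVsmul b v₁ hv₁V)
      refine htrans _ hv₀V k t ?_ ?_
      · show a * w i + b * v₁ i = t
        rw [hv₁i, mul_zero, add_zero, hadef]
        field_simp
      · show a * w k + b * v₁ k = 0
        rw [hbdef]
        field_simp
        ring
    · have hzero : ∀ v ∈ V, v k = 0 := by
        intro v hv
        by_contra hne
        exact hNZk ⟨v, hv, hne⟩
      have hJz : ∀ s : ZMod p, J k s = 0 := by
        intro s
        rw [hJdef]
        apply Finset.sum_eq_zero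
        intro v hv
        rw [hzero v (Finset.mem_filter.mp (Finset.mem_filter.mp hv).1).2, hd0]
      rw [hJz t, hJz 0]
  have hcardF : ∀ t : ZMod p, (Vf.filter (fun v => v i = t)).card
      = (Vf.filter (fun v => v i = 0)).card := by
    intro t
    obtain ⟨v₀, hv₀V, hv₀i⟩ := hsur1 t
    refine Finset.card_nbij' (fun v => v - v₀) (fun v => v + v₀) ?_ ?_ ?_ ?_
    · intro v hv
      rw [Finset.mem_coe, Finset.mem_filter] at hv ⊢
      obtain ⟨hv1, hv2⟩ := hv
      rw [Finset.mem_filter] at hv1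
      refine ⟨Finset.mem_filter.mpr ⟨Finset.mem_univ _, sub_mem hv1.2 hv₀V⟩, ?_⟩
      show v i - v₀ i = 0
      rw [hv2, hv₀i, sub_self]
    · intro v hv
      rw [Finset.mem_coe, Finset.mem_filter] at hv ⊢
      obtain ⟨hv1, hv2⟩ := hv
      rw [Finset.mem_filter] at hv1
      refine ⟨Finset.mem_filter.mpr ⟨Finset.mem_univ _, add_mem hv1.2 hv₀V⟩, ?_⟩
      show v i + v₀ i = t
      rw [hv2, hv₀i, zero_add]
    · intro v _; simp
    · intro v _; simp
  set m : ℚ := ((Vf.filter (fun v => v i = 0)).card : ℚ) with hmdef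
  have hJcl : ∀ k ∈ Clf i, ∀ t, J k t = m * dbar (cc k * t) := by
    intro k hk t
    show (∑ v ∈ Vf.filter (fun v => v i = t), dbar (v k)) = m * dbar (cc k * t)
    have h1 : ∀ v ∈ Vf.filter (fun v => v i = t), dbar (v k) = dbar (cc k * t) := by
      intro v hv
      rw [Finset.mem_filter] at hv
      have hvV := (Finset.mem_filter.mp hv.1).2
      rw [(hcc k hk).2 v hvV, hv.2]
    rw [Finset.sum_congr rfl h1, Finset.sum_const, hcardF t, nsmul_eq_mul, hmdef]
  have hmpos : m ≠ 0 := by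
    rw [hmdef]
    have h0m : (0 : Fin n → ZMod p) ∈ Vf.filter (fun v => v i = 0) := by
      rw [Finset.mem_filter, Finset.mem_filter]
      exact ⟨⟨Finset.mem_univ _, zero_mem V⟩, rfl⟩
    have hpos := Finset.card_pos.mpr ⟨_, h0m⟩
    exact Nat.cast_ne_zero.mpr hpos.ne'
  have hmaster : ∀ t, ∑ k ∈ Clf i, dbar (cc k * t) = 0 := by
    intro t
    have h1 : ∑ k, (J k t - J k 0) = 0 := by
      rw [Finset.sum_sub_distrib, hJtot t, hJtot 0, sub_zero]
    have h2 : ∑ k ∈ Clf i, (J k t - J k 0) = ∑ k, (J k t - J k 0) := by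
      apply Finset.sum_subset (Finset.subset_univ (Clf i))
      intro k _ hk
      rw [hJoff k hk t, sub_self]
    have h3 : ∑ k ∈ Clf i, (J k t - J k 0) = m * ∑ k ∈ Clf i, dbar (cc k * t) := by
      rw [Finset.mul_sum]
      apply Finset.sum_congr rfl
      intro k hk
      rw [hJcl k hk t, hJcl k hk 0, mul_zero, hd0, mul_zero, sub_zero]
    have h4 := h3.symm.trans (h2.trans h1)
    exact (mul_eq_zero.mp h4).resolve_left hmpos
  have hii : i ∈ Clf i := Finset.mem_filter.mpr ⟨Finset.mem_univ _,
    ⟨w, hwV, hwi⟩, 1, one_ne_zero, fun v _ => (one_mul _).symm⟩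
  have hcard1 : 1 ≤ (Clf i).card := Finset.card_pos.mpr ⟨i, hii⟩
  intro x
  have hcase : (Clf i).card = 1 ∨ (Clf i).card = 2 := by omega
  rcases hcase with h | h
  · obtain ⟨a, ha⟩ := Finset.card_eq_one.mp h
    have hai : a = i := by
      have h5 := hii; rw [ha, Finset.mem_singleton] at h5; exact h5.symm
    have hrel := hmaster ((cc i)⁻¹ * x)
    rw [ha, hai, Finset.sum_singleton] at hrel
    have hci : cc i ≠ 0 := (hcc i hii).1
    rwa [show cc i * ((cc i)⁻¹ * x) = x by field_simp] at hrel
  · obtain ⟨a, b, hab, hCl⟩ := Finset.card_eq_two.mp h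
    have haC : a ∈ Clf i := by rw [hCl]; simp
    have hbC : b ∈ Clf i := by rw [hCl]; simp
    have hca : cc a ≠ 0 := (hcc a haC).1
    have hcb : cc b ≠ 0 := (hcc b hbC).1
    set u : ZMod p := cc b * (cc a)⁻¹ with hudef
    have hu : u ≠ 0 := mul_ne_zero hcb (inv_ne_zero hca)
    have hrel : ∀ y, dbar (u * y) = - dbar y := by
      intro y
      have h6 := hmaster ((cc a)⁻¹ * y)
      rw [hCl, Finset.sum_pair hab] at h6
      rw [show cc a * ((cc a)⁻¹ * y) = y by field_simp] at h6
      rw [show cc b * ((cc a)⁻¹ * y) = u * y by rw [hudef]; ring] at h6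
      linarith
    exact stmt16_orbit p hp h3 dbar hdneg u hu hrel x

/-- Appendix theorem: if `p ≡ 3 (mod 4)` is prime, `d̄ : ℤ/pℤ → ℚ` is even with
`d̄(0) = 0`, and `M ⊆ (ℤ/p²ℤ)ⁿ` is a subgroup of order `pⁿ` such that
`Σᵢ d̄(mᵢ) = 0` whenever `(p·m₁, …, p·mₙ) ∈ M`, then `d̄ ≡ 0`. -/
theorem stmt16 (p n : ℕ) (hp : p.Prime) (h3 : p % 4 = 3) (hn : 0 < n)
    (dbar : ZMod p → ℚ) (hd0 : dbar 0 = 0) (hdneg : ∀ x, dbar (-x) = dbar x)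
    (M : AddSubgroup (Fin n → ZMod (p ^ 2))) (hM : Nat.card M = p ^ n)
    (hvan : ∀ m : Fin n → ZMod p,
      (fun i => (p : ZMod (p ^ 2)) * ((m i).val : ZMod (p ^ 2))) ∈ M →
        ∑ i, dbar (m i) = 0) :
    ∀ x, dbar x = 0 := by
  classical
  haveI : Fact p.Prime := ⟨hp⟩
  haveI : NeZero p := ⟨hp.pos.ne'⟩
  haveI : NeZero (p ^ 2) := ⟨pow_ne_zero 2 hp.pos.ne'⟩
  set V : AddSubgroup (Fin n → ZMod p) := M.comap (stmt16_Fh p n) with hVdef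
  have hFh_eq : ∀ m : Fin n → ZMod p,
      (stmt16_Fh p n) m = fun i => (p : ZMod (p ^ 2)) * ((m i).val : ZMod (p ^ 2)) := by
    intro m; funext i
    show ((p * (m i).val : ℕ) : ZMod (p ^ 2)) = _
    push_cast; ring
  have hVsum : ∀ v ∈ V, ∑ i, dbar (v i) = 0 := by
    intro v hv
    exact hvan v (hFh_eq v ▸ (AddSubgroup.mem_comap.mp hv))
  have hVsmul : ∀ (c : ZMod p), ∀ v ∈ V, (fun j => c * v j) ∈ V := by
    intro c v hv
    have h1 : (fun j => c * v j) = c.val • v := by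
      funext j
      show c * v j = c.val • v j
      rw [nsmul_eq_mul]
      congr 1
      exact (ZMod.natCast_rightInverse c).symm ▸ rfl
    rw [h1]
    exact nsmul_mem hv c.val
  -- cardinality bound
  have hK1 : ∀ x : ZMod (p ^ 2), stmt16_fh p (ZMod.castHom (dvd_pow_self p two_ne_zero) (ZMod p) x)
      = (p : ℕ) • x := by
    intro x
    have hx : (ZMod.castHom (dvd_pow_self p two_ne_zero) (ZMod p) x) = ((x.val : ℕ) : ZMod p) := by
      simp [ZMod.natCast_val]
    show ((p * (ZMod.castHom (dvd_pow_self p two_ne_zero) (ZMod p) x).val : ℕ) : ZMod (p ^ 2))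
        = (p : ℕ) • x
    rw [hx, ZMod.val_natCast]
    rw [stmt16_aux_cast p _ x.val (Nat.mod_mod_of_dvd _ dvd_rfl)]
    rw [nsmul_eq_mul]
    push_cast
    rw [ZMod.natCast_val, ZMod.cast_id]
  have hK2 : ∀ x : ZMod (p ^ 2), ZMod.castHom (dvd_pow_self p two_ne_zero) (ZMod p) x = 0 →
      stmt16_fh p ((x.val / p : ℕ) : ZMod p) = x := by
    intro x hx
    have hdvd : p ∣ x.val := by
      have h7 : ((x.val : ℕ) : ZMod p) = 0 := by
        rw [ZMod.natCast_val x, ← ZMod.castHom_apply (h := dvd_pow_self p two_ne_zero), hx]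
      exact (ZMod.natCast_eq_zero_iff _ _).mp h7
    have hlt : x.val / p < p :=
      Nat.div_lt_of_lt_mul (lt_of_lt_of_eq x.val_lt (pow_two p))
    show ((p * (((x.val / p : ℕ) : ZMod p)).val : ℕ) : ZMod (p ^ 2)) = x
    rw [ZMod.val_natCast, Nat.mod_eq_of_lt hlt, Nat.mul_div_cancel' hdvd,
      ZMod.natCast_val, ZMod.cast_id]
  set φ : ↥M →+ (Fin n → ZMod p) := (stmt16_Rh p n).comp M.subtype with hφdef
  have hrange : φ.range ≤ V := by
    rintro y ⟨m, rfl⟩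
    show stmt16_Fh p n (φ m) ∈ M
    have h8 : stmt16_Fh p n (φ m) = (p : ℕ) • (m : Fin n → ZMod (p ^ 2)) := by
      funext i
      exact hK1 ((m : Fin n → ZMod (p ^ 2)) i)
    rw [h8]
    exact nsmul_mem m.2 p
  have hker : Nat.card φ.ker ≤ Nat.card V := by
    have heq : ∀ m : φ.ker, stmt16_Fh p n
        (fun i => (((((m : ↥M) : Fin n → ZMod (p ^ 2)) i).val / p : ℕ) : ZMod p))
        = ((m : ↥M) : Fin n → ZMod (p ^ 2)) := by
      intro m
      funext i
      exact hK2 _ (congrFun (m.2 : φ (m : ↥M) = 0) i)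
    have hmap : ∀ m : φ.ker, (fun i => ((((m : ↥M) : Fin n → ZMod (p ^ 2)) i).val / p : ℕ) :
        Fin n → ZMod p) ∈ V := by
      intro m
      show stmt16_Fh p n _ ∈ M
      rw [heq m]
      exact (m : ↥M).2
    have hinj : Function.Injective (fun m : φ.ker =>
        (⟨fun i => ((((m : ↥M) : Fin n → ZMod (p ^ 2)) i).val / p : ℕ), hmap m⟩ : ↥V)) := by
      intro m m' h
      have h2 := congrArg (fun v : ↥V => stmt16_Fh p n (v : Fin n → ZMod p)) h
      simp only at h2
      rw [heq m, heq m'] at h2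
      exact Subtype.ext (Subtype.ext h2)
    exact Nat.card_le_card_of_injective _ hinj
  have hVcard : p ^ n ≤ Nat.card V * Nat.card V := by
    have h1 : Nat.card ↥M = Nat.card φ.range * Nat.card φ.ker := by
      rw [AddSubgroup.card_eq_card_quotient_mul_card_addSubgroup φ.ker]
      congr 1
      exact Nat.card_congr (QuotientAddGroup.quotientKerEquivRange φ).toEquiv
    have h2 : Nat.card φ.range ≤ Nat.card V :=
      Nat.card_le_card_of_injective (AddSubgroup.inclusion hrange)
        (AddSubgroup.inclusion_injective hrange)
    calc p ^ n = Nat.card ↥M := hM.symm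
      _ = Nat.card φ.range * Nat.card φ.ker := h1
      _ ≤ Nat.card V * Nat.card V := Nat.mul_le_mul h2 hker
  exact stmt16_comb p n hp h3 hn dbar hd0 hdneg V hVsum hVsmul hVcard
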